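/- Necessary condition for determinantal data: with l_k ≥ 1, Σ l_k = n ≥ 2, d_k ≥ 1, s_0 ≤ ··· ≤ s_n positive integers, if there exists a determinantal m ∈ ℤ^r (N(m) = {0,1}), then for every k ∈ {1,...,r}: d_k (s_{n−l_k+2} + ··· + s_n) − l_k < d_k (s_0 + s_1), where the sum s_{n−l_k+2}+···+s_n is empty (equal to 0) when l_k ≤ 1. -/

import Mathlib

/-- `P_k(m) = {z ∈ ℤ : m < z·d ≤ m + l}`, the integers in `(m/d, (m+l)/d]`. -/
def Pset (m : ℤ) (d l : ℕ) : Set ℤ := {z : ℤ | m < z * d ∧ z * d ≤ m + l}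

/-- The set of sums of `p` distinct entries of `s`. -/
def Sset {n : ℕ} (s : Fin (n + 1) → ℕ) (p : ℕ) : Set ℤ :=
  {t : ℤ | ∃ A : Finset (Fin (n + 1)), A.card = p ∧ t = ∑ i ∈ A, (s i : ℤ)}

/-- `q(z) = Σ_{P_k(m) < z} l_k`, where `P_k < z` means `z·d_k > m_k + l_k`. -/
def qval {r : ℕ} (l d : Fin r → ℕ) (m : Fin r → ℤ) (z : ℤ) : ℕ :=
  ∑ k ∈ Finset.univ.filter (fun k => m k + (l k : ℤ) < z * (d k : ℤ)), l k

/-- `N(m) = { p − q(z) : p ∈ [0, n+1], z ∈ Q_p }` with `Q_p = S_p \ ⋃_k P_k(m)`. -/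
def Nset {r n : ℕ} (l d : Fin r → ℕ) (s : Fin (n + 1) → ℕ) (m : Fin r → ℤ) : Set ℤ :=
  {ν : ℤ | ∃ p : ℕ, p ≤ n + 1 ∧ ∃ z : ℤ,
    (z ∈ Sset s p ∧ ∀ k, z ∉ Pset (m k) (d k) (l k)) ∧
    ν = (p : ℤ) - (qval l d m z : ℤ)}

set_option linter.unusedVariables false

namespace Stmt18


/-- Capacity: an interval `(m, m+l]` (in `z*d` scale) contains at most `l` integers. -/
lemma cap (mj : ℤ) (dj lj : ℕ) (hd : 1 ≤ dj) (T : Finset ℤ)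
    (hT : ∀ z ∈ T, mj < z * dj ∧ z * dj ≤ mj + lj) : T.card ≤ lj := by
  rcases T.eq_empty_or_nonempty with h | h
  · simp [h]
  · set z0 := T.min' h with hz0
    have hz0m := T.min'_mem h
    have hsub : T ⊆ Finset.Icc z0 (z0 + lj - 1) := by
      intro z hz
      have h1 := hT z hz
      have h0 := hT z0 hz0m
      have hle : z0 ≤ z := T.min'_le z hz
      have hdz : (z - z0) ≤ (z - z0) * dj := by
        nlinarith [sub_nonneg.mpr hle, (by exact_mod_cast hd : (1:ℤ) ≤ (dj:ℤ))]
      have : (z - z0) * dj < lj := by nlinarith [h1.2, h0.1]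
      simp only [Finset.mem_Icc]
      omega
    calc T.card ≤ (Finset.Icc z0 (z0 + lj - 1)).card := Finset.card_le_card hsub
      _ ≤ lj := by rw [Int.card_Icc]; omega

/-- Union bound: if every point of `P` is covered by some interval in `E`,
then `|P| ≤ ∑_{j∈E} l j`. -/
lemma ub {r : ℕ} (l d : Fin r → ℕ) (m : Fin r → ℤ) (hr : 1 ≤ r) (hd : ∀ j, 1 ≤ d j)
    (E : Finset (Fin r)) (P : Finset ℤ)
    (h : ∀ z ∈ P, ∃ j ∈ E, m j < z * d j ∧ z * d j ≤ m j + l j) :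
    P.card ≤ ∑ j ∈ E, l j := by
  classical
  have hj0 : Fin r := ⟨0, hr⟩
  set φ : ℤ → Fin r := fun z =>
    if hz : ∃ j ∈ E, m j < z * d j ∧ z * d j ≤ m j + l j then hz.choose else hj0 with hφ
  have hmaps : ∀ z ∈ P, φ z ∈ E := by
    intro z hz
    have := h z hz
    simp only [hφ, dif_pos this]
    exact this.choose_spec.1
  rw [Finset.card_eq_sum_card_fiberwise hmaps]
  refine Finset.sum_le_sum ?_
  intro j hj
  refine cap (m j) (d j) (l j) (hd j) _ ?_
  intro z hz
  simp only [Finset.mem_filter] at hz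
  obtain ⟨hzP, hzj⟩ := hz
  have hcov := h z hzP
  have : φ z = (h z hzP).choose := by simp [hφ, dif_pos hcov]
  have hspec := hcov.choose_spec.2
  rw [← hzj]
  simpa [this] using hspec


variable {n : ℕ} (s : Fin (n + 1) → ℕ)

variable {n : ℕ} (s : Fin (n + 1) → ℕ)

/-- `s` as a function on `ℕ` (clamped). -/
def sI (j : ℕ) : ℤ := (s ⟨min j n, by omega⟩ : ℤ)

lemma sI_eq (j : ℕ) (h : j ≤ n) : sI s j = (s ⟨j, by omega⟩ : ℤ) := by
  unfold sI
  congr 2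
  apply Fin.ext
  simp
  omega

lemma sI_mono (hmono : Monotone s) {j j' : ℕ} (h : j ≤ j') : sI s j ≤ sI s j' := by
  unfold sI
  have : (⟨min j n, by omega⟩ : Fin (n+1)) ≤ ⟨min j' n, by omega⟩ := by
    simp only [Fin.mk_le_mk]; omega
  exact_mod_cast Nat.cast_le.mpr (hmono this)

lemma sI_pos (hs : ∀ i, 0 < s i) (j : ℕ) : 0 < sI s j := by
  unfold sI; exact_mod_cast hs _

/-- bottom index set -/
def Bf (n t : ℕ) : Finset (Fin (n+1)) := Finset.univ.filter (fun i => (i : ℕ) < t)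
/-- top index set -/
def Af (n t : ℕ) : Finset (Fin (n+1)) := Finset.univ.filter (fun i => n + 1 ≤ (i : ℕ) + t)

/-- bottom sum -/
def Bv (t : ℕ) : ℤ := ∑ i ∈ Bf n t, (s i : ℤ)
/-- top sum -/
def Av (t : ℕ) : ℤ := ∑ i ∈ Af n t, (s i : ℤ)

lemma card_Bf (t : ℕ) (h : t ≤ n + 1) : (Bf n t).card = t := by
  classical
  unfold Bf
  rw [show Finset.univ.filter (fun i : Fin (n+1) => (i : ℕ) < t)
      = Finset.univ.map (Fin.castLEEmb h) by
    ext i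
    simp only [Finset.mem_filter, Finset.mem_univ, true_and, Finset.mem_map,
      Fin.castLEEmb_apply]
    constructor
    · intro hi; exact ⟨⟨i, hi⟩, by simp [Fin.castLE]⟩
    · rintro ⟨j, rfl⟩; simpa using j.isLt]
  simp

lemma card_Af (t : ℕ) (h : t ≤ n + 1) : (Af n t).card = t := by
  classical
  have h2 : (Bf n (n+1-t)).card = n+1-t := card_Bf (n+1-t) (by omega)
  have hsplit : (Af n t).card + (Bf n (n+1-t)).card = n + 1 := by
    have hA : Af n t = Finset.univ.filter (fun i : Fin (n+1) => ¬ ((i : ℕ) < n+1-t)) := by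
      unfold Af
      apply Finset.filter_congr
      intro i _
      have := i.isLt
      constructor
      · intro hi; simp only [not_lt] at *; omega
      · intro hi; simp only [not_lt] at *; simp at hi ⊢; omega
    have hB : Bf n (n+1-t) = Finset.univ.filter (fun i : Fin (n+1) => ((i : ℕ) < n+1-t)) := rfl
    rw [hA, hB, add_comm]
    rw [Finset.card_filter_add_card_filter_not]
    simp
  omega

lemma Bv_succ (t : ℕ) (h : t ≤ n) : Bv s (t+1) = Bv s t + sI s t := by
  unfold Bv
  rw [sI_eq s t h]
  have : Bf n (t+1) = insert ⟨t, by omega⟩ (Bf n t) := by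
    ext i
    simp only [Bf, Finset.mem_filter, Finset.mem_univ, true_and, Finset.mem_insert]
    constructor
    · intro hi
      rcases Nat.lt_or_ge (i : ℕ) t with h' | h'
      · right; exact h'
      · left; have : (i : ℕ) = t := by omega
        exact Fin.ext this
    · rintro (rfl | hi)
      · simp
      · omega
  rw [this, Finset.sum_insert (by simp [Bf])]
  ring

lemma Av_succ (t : ℕ) (h : t ≤ n) : Av s (t+1) = Av s t + sI s (n - t) := by
  unfold Av
  rw [sI_eq s (n-t) (by omega)]
  have : Af n (t+1) = insert ⟨n-t, by omega⟩ (Af n t) := by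
    ext i
    simp only [Af, Finset.mem_filter, Finset.mem_univ, true_and, Finset.mem_insert]
    constructor
    · intro hi
      rcases Nat.lt_or_ge (i : ℕ) (n+1-t) with h' | h'
      · left; have : (i:ℕ) = n - t := by omega
        exact Fin.ext this
      · right; omega
    · rintro (rfl | hi)
      · show n + 1 ≤ n - t + (t+1)
        omega
      · omega
  rw [this, Finset.sum_insert (by
    simp only [Af, Finset.mem_filter, Finset.mem_univ, true_and]
    show ¬ (n + 1 ≤ n - t + t)
    omega)]
  ring

lemma Bv_zero : Bv s 0 = 0 := by simp [Bv, Bf]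
lemma Av_zero : Av s 0 = 0 := by
  unfold Av
  rw [show Af n 0 = ∅ by ext i; simp [Af]; omega]
  simp

lemma Bv_repr (t : ℕ) (h : t ≤ n + 1) : Bv s t = ∑ j ∈ Finset.range t, sI s j := by
  induction t with
  | zero => simp [Bv_zero]
  | succ t ih =>
    rw [Bv_succ s t (by omega), Finset.sum_range_succ, ih (by omega)]

lemma Av_repr (t : ℕ) (h : t ≤ n + 1) : Av s t = ∑ j ∈ Finset.range t, sI s (n - j) := by
  induction t with
  | zero => simp [Av_zero]
  | succ t ih =>
    rw [Av_succ s t (by omega), Finset.sum_range_succ, ih (by omega)]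

lemma mem_Sset_B (t : ℕ) (h : t ≤ n + 1) : Bv s t ∈ Sset s t :=
  ⟨Bf n t, card_Bf t h, rfl⟩

lemma mem_Sset_A (t : ℕ) (h : t ≤ n + 1) : Av s t ∈ Sset s t :=
  ⟨Af n t, card_Af t h, rfl⟩

lemma Bv_lt_succ (hs : ∀ i, 0 < s i) (t : ℕ) (h : t ≤ n) : Bv s t < Bv s (t+1) := by
  rw [Bv_succ s t h]
  have := sI_pos s hs t
  omega

lemma Av_lt_succ (hs : ∀ i, 0 < s i) (t : ℕ) (h : t ≤ n) : Av s t < Av s (t+1) := by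
  rw [Av_succ s t h]
  have := sI_pos s hs (n-t)
  omega

lemma Bv_strictMonoOn (hs : ∀ i, 0 < s i) {t t' : ℕ} (h : t < t') (h' : t' ≤ n+1) :
    Bv s t < Bv s t' := by
  induction t' with
  | zero => omega
  | succ u ih =>
    rcases Nat.lt_or_ge t u with h2 | h2
    · exact lt_trans (ih h2 (by omega)) (Bv_lt_succ s hs u (by omega))
    · have : t = u := by omega
      subst this
      exact Bv_lt_succ s hs t (by omega)

lemma Av_strictMonoOn (hs : ∀ i, 0 < s i) {t t' : ℕ} (h : t < t') (h' : t' ≤ n+1) :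
    Av s t < Av s t' := by
  induction t' with
  | zero => omega
  | succ u ih =>
    rcases Nat.lt_or_ge t u with h2 | h2
    · exact lt_trans (ih h2 (by omega)) (Av_lt_succ s hs u (by omega))
    · have : t = u := by omega
      subst this
      exact Av_lt_succ s hs t (by omega)

lemma Bv_le_Av (hmono : Monotone s) (t : ℕ) (h : t ≤ n + 1) : Bv s t ≤ Av s t := by
  rw [Bv_repr s t h, Av_repr s t h]
  rw [← Finset.sum_range_reflect (fun j => sI s j) t]
  refine Finset.sum_le_sum ?_
  intro i hi
  simp only [Finset.mem_range] at hi
  exact sI_mono s hmono (by omega)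

/-- The key shift inequality: `A(c+L−1) − A(L−1) ≥ B(c+2) − B 2` for `c + L ≤ n`. -/
lemma shift (hmono : Monotone s) (c LL : ℕ) (hL : 1 ≤ LL) (h : c + LL ≤ n) :
    Av s (LL-1) + Bv s (c+2) ≤ Av s (c+LL-1) + Bv s 2 := by
  have e1 : Av s (c+LL-1) = Av s (LL-1) + ∑ i ∈ Finset.range c, sI s (n - (LL-1+i)) := by
    rw [Av_repr s (c+LL-1) (by omega), Av_repr s (LL-1) (by omega)]
    rw [← Finset.sum_range_add_sum_Ico _ (show LL-1 ≤ c+LL-1 by omega)]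
    congr 1
    rw [Finset.sum_Ico_eq_sum_range]
    have hc : c+LL-1 - (LL-1) = c := by omega
    rw [hc]
  have e2 : Bv s (c+2) = Bv s 2 + ∑ i ∈ Finset.range c, sI s (2+i) := by
    rw [Bv_repr s (c+2) (by omega), Bv_repr s 2 (by omega)]
    rw [← Finset.sum_range_add_sum_Ico _ (show 2 ≤ c+2 by omega)]
    congr 1
    rw [Finset.sum_Ico_eq_sum_range]
    have hc : c+2 - 2 = c := by omega
    rw [hc]
  rw [e1, e2]
  have : ∑ i ∈ Finset.range c, sI s (2+i) ≤ ∑ i ∈ Finset.range c, sI s (n - (LL-1+i)) := by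
    rw [← Finset.sum_range_reflect (fun i => sI s (2+i)) c]
    refine Finset.sum_le_sum ?_
    intro i hi
    simp only [Finset.mem_range] at hi
    exact sI_mono s hmono (by omega)
  omega


lemma Bv_mono (hs : ∀ i, 0 < s i) {t t' : ℕ} (h : t ≤ t') (h' : t' ≤ n+1) :
    Bv s t ≤ Bv s t' := by
  rcases Nat.lt_or_ge t t' with h1 | h1
  · exact le_of_lt (Bv_strictMonoOn s hs h1 h')
  · have : t = t' := by omega
    rw [this]

lemma Av_mono (hs : ∀ i, 0 < s i) {t t' : ℕ} (h : t ≤ t') (h' : t' ≤ n+1) :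
    Av s t ≤ Av s t' := by
  rcases Nat.lt_or_ge t t' with h1 | h1
  · exact le_of_lt (Av_strictMonoOn s hs h1 h')
  · have : t = t' := by omega
    rw [this]

section Main

variable {r : ℕ} (l d : Fin r → ℕ) (m : Fin r → ℤ)

/-- scaled product monotone -/
lemma zdm {z z' : ℤ} (dj : ℕ) (h : z ≤ z') : z * (dj : ℤ) ≤ z' * (dj : ℤ) :=
  mul_le_mul_of_nonneg_right h (by positivity)

/-- main constraint packaged -/
def Key : Prop := ∀ (p : ℕ) (z : ℤ), p ≤ n+1 → z ∈ Sset s p →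
    (∀ j, ¬(m j < z * d j ∧ z * d j ≤ m j + l j)) →
    qval l d m z ≤ p ∧ p ≤ qval l d m z + 1

lemma sum_erase (hj : ∀ j, 1 ≤ l j) (hsum : ∑ j, l j = n) (k : Fin r) :
    l k + ∑ j ∈ Finset.univ.erase k, l j = n := by
  rw [← hsum, Finset.add_sum_erase _ _ (Finset.mem_univ k)]

lemma q_split (w : ℤ) (k : Fin r)
    (hk : m k + (l k:ℤ) < w * d k) :
    qval l d m w = l k + ∑ j ∈ (Finset.univ.filter (fun j => m j + (l j:ℤ) < w * d j)).erase k, l j := by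
  classical
  rw [qval, ← Finset.add_sum_erase _ _ (Finset.mem_filter.mpr ⟨Finset.mem_univ k, hk⟩)]

/-- P1 : `e_k ≥ a_{L-1}`. -/
lemma P1 (hr : 1 ≤ r) (hn : 2 ≤ n) (hl : ∀ j, 1 ≤ l j) (hd : ∀ j, 1 ≤ d j)
    (hsum : ∑ j, l j = n) (hs : ∀ i, 0 < s i)
    (key : Key s l d m) (k : Fin r) (hLn : l k ≤ n) :
    ¬ (m k + (l k:ℤ) < Av s (l k - 1) * d k) := by
  classical
  intro hcon
  set L := l k with hL
  have hL1 : 1 ≤ L := hl k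
  -- every point Av t, t ∈ [L-1, n+1], is not covered by k
  have hnotk : ∀ t, L - 1 ≤ t → t ≤ n+1 →
      ¬ (m k < Av s t * d k ∧ Av s t * d k ≤ m k + l k) := by
    intro t h1 h2 hcov
    have : Av s (L-1) * d k ≤ Av s t * d k := zdm _ (Av_mono s hs h1 h2)
    omega
  -- uncovered point exists
  set U := (Finset.Icc (L-1) (n+1)).filter (fun t => ∀ j, ¬(m j < Av s t * d j ∧ Av s t * d j ≤ m j + l j)) with hU
  have hUne : U.Nonempty := by
    by_contra hemp
    push_neg at hemp
    -- all points covered, by intervals ≠ k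
    set P := (Finset.Icc (L-1) (n+1)).image (fun t => Av s t) with hP
    have hcard : P.card = n + 3 - L := by
      rw [hP, Finset.card_image_of_injOn, Nat.card_Icc]
      · omega
      · intro t ht t' ht' he
        simp only [Finset.coe_Icc, Set.mem_Icc] at ht ht'
        by_contra hne
        rcases Nat.lt_or_ge t t' with h | h
        · exact absurd he (ne_of_lt (Av_strictMonoOn s hs h ht'.2))
        · have : t' < t := by omega
          exact absurd he.symm (ne_of_lt (Av_strictMonoOn s hs this ht.2))
    have hcov : ∀ z ∈ P, ∃ j ∈ Finset.univ.erase k, m j < z * d j ∧ z * d j ≤ m j + l j := by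
      intro z hz
      rw [hP, Finset.mem_image] at hz
      obtain ⟨t, ht, rfl⟩ := hz
      simp only [Finset.mem_Icc] at ht
      rw [Finset.eq_empty_iff_forall_notMem] at hemp
      have h2 := hemp t
      rw [hU, Finset.mem_filter] at h2
      push_neg at h2
      obtain ⟨j, hj⟩ := h2 (Finset.mem_Icc.mpr ht)
      refine ⟨j, ?_, hj⟩
      rw [Finset.mem_erase]
      refine ⟨?_, Finset.mem_univ j⟩
      rintro rfl
      exact hnotk t ht.1 ht.2 hj
    have := ub l d m hr hd _ P hcov
    rw [hcard] at this
    have h3 := sum_erase l hl hsum k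
    omega
  -- minimal uncovered point
  set t0 := U.min' hUne with ht0
  obtain ⟨hIcc0, ht0unc⟩ := Finset.mem_filter.mp (U.min'_mem hUne)
  rw [Finset.mem_Icc] at hIcc0
  obtain ⟨ht0a, ht0b⟩ := hIcc0
  have hq := key t0 (Av s t0) ht0b (mem_Sset_A s t0 ht0b) ht0unc
  -- lower bound on q
  have hkin : m k + (l k:ℤ) < Av s t0 * d k :=
    lt_of_lt_of_le hcon (zdm _ (Av_mono s hs ht0a ht0b))
  rw [q_split l d m _ k hkin] at hq
  set F := (Finset.univ.filter (fun j => m j + (l j:ℤ) < Av s t0 * d j)).erase k with hF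
  set P' := (Finset.Ico (L-1) t0).image (fun t => Av s t) with hP'
  have hcard' : P'.card = t0 - (L-1) := by
    rw [hP', Finset.card_image_of_injOn, Nat.card_Ico]
    intro t ht t' ht' he
    simp only [Finset.coe_Ico, Set.mem_Ico] at ht ht'
    by_contra hne
    rcases Nat.lt_or_ge t t' with h | h
    · exact absurd he (ne_of_lt (Av_strictMonoOn s hs h (by omega)))
    · have : t' < t := by omega
      exact absurd he.symm (ne_of_lt (Av_strictMonoOn s hs this (by omega)))
  have hcov' : ∀ z ∈ P', ∃ j ∈ F, m j < z * d j ∧ z * d j ≤ m j + l j := by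
    intro z hz
    rw [hP', Finset.mem_image] at hz
    obtain ⟨t, ht, rfl⟩ := hz
    simp only [Finset.mem_Ico] at ht
    -- t < t0 so t ∉ U, so covered
    have htnU : t ∉ U := by
      intro hmem
      have := U.min'_le t hmem
      omega
    rw [hU, Finset.mem_filter] at htnU
    push_neg at htnU
    obtain ⟨j, hj⟩ := htnU (Finset.mem_Icc.mpr ⟨ht.1, by omega⟩)
    refine ⟨j, ?_, hj⟩
    rw [hF, Finset.mem_erase]
    have hjk : j ≠ k := by
      rintro rfl
      exact hnotk t ht.1 (by omega) hj
    refine ⟨hjk, ?_⟩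
    rw [Finset.mem_filter]
    refine ⟨Finset.mem_univ j, ?_⟩
    -- e_j < Av t0 : else Av t0 covered by j
    by_contra hnot
    push_neg at hnot
    apply ht0unc j
    constructor
    · calc m j < Av s t * d j := hj.1
        _ ≤ Av s t0 * d j := zdm _ (Av_mono s hs (le_of_lt ht.2) ht0b)
    · exact hnot
  have hub := ub l d m hr hd F P' hcov'
  rw [hcard'] at hub
  have hLk : 1 ≤ L := hl k
  omega

/-- P2 : `i_k < b_{n-L+2}`. -/
lemma P2 (hr : 1 ≤ r) (hn : 2 ≤ n) (hl : ∀ j, 1 ≤ l j) (hd : ∀ j, 1 ≤ d j)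
    (hsum : ∑ j, l j = n) (hs : ∀ i, 0 < s i)
    (key : Key s l d m) (k : Fin r) (hLn : l k ≤ n) :
    ¬ (Bv s (n - l k + 2) * d k ≤ m k) := by
  classical
  intro hcon
  set L := l k with hL
  have hL1 : 1 ≤ L := hl k
  -- points Bv t, t ≤ n-L+2, not covered by k
  have hnotk : ∀ t, t ≤ n-L+2 →
      ¬ (m k < Bv s t * d k ∧ Bv s t * d k ≤ m k + l k) := by
    intro t h2 hcov
    have : Bv s t * d k ≤ Bv s (n-L+2) * d k := zdm _ (Bv_mono s hs h2 (by omega))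
    omega
  set U := (Finset.Icc 0 (n-L+2)).filter (fun t => ∀ j, ¬(m j < Bv s t * d j ∧ Bv s t * d j ≤ m j + l j)) with hU
  have hUne : U.Nonempty := by
    by_contra hemp
    push_neg at hemp
    set P := (Finset.Icc 0 (n-L+2)).image (fun t => Bv s t) with hP
    have hcard : P.card = n - L + 3 := by
      rw [hP, Finset.card_image_of_injOn, Nat.card_Icc]
      · omega
      · intro t ht t' ht' he
        simp only [Finset.coe_Icc, Set.mem_Icc] at ht ht'
        by_contra hne
        rcases Nat.lt_or_ge t t' with h | h
        · exact absurd he (ne_of_lt (Bv_strictMonoOn s hs h (by omega)))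
        · have : t' < t := by omega
          exact absurd he.symm (ne_of_lt (Bv_strictMonoOn s hs this (by omega)))
    have hcov : ∀ z ∈ P, ∃ j ∈ Finset.univ.erase k, m j < z * d j ∧ z * d j ≤ m j + l j := by
      intro z hz
      rw [hP, Finset.mem_image] at hz
      obtain ⟨t, ht, rfl⟩ := hz
      simp only [Finset.mem_Icc] at ht
      rw [Finset.eq_empty_iff_forall_notMem] at hemp
      have h2 := hemp t
      rw [hU, Finset.mem_filter] at h2
      push_neg at h2
      obtain ⟨j, hj⟩ := h2 (Finset.mem_Icc.mpr ht)
      refine ⟨j, ?_, hj⟩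
      rw [Finset.mem_erase]
      refine ⟨?_, Finset.mem_univ j⟩
      rintro rfl
      exact hnotk t ht.2 hj
    have := ub l d m hr hd _ P hcov
    rw [hcard] at this
    have h3 := sum_erase l hl hsum k
    omega
  -- maximal uncovered point
  set t1 := U.max' hUne with ht1
  obtain ⟨hIcc1, ht1unc⟩ := Finset.mem_filter.mp (U.max'_mem hUne)
  rw [Finset.mem_Icc] at hIcc1
  obtain ⟨_, ht1b⟩ := hIcc1
  have hq := key t1 (Bv s t1) (by omega) (mem_Sset_B s t1 (by omega)) ht1unc
  -- complement sum: Σ_{j : ¬(e_j < w)} l j = n - q w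
  set w := Bv s t1 with hw
  have hcomp : qval l d m w + ∑ j ∈ Finset.univ.filter (fun j => ¬(m j + (l j:ℤ) < w * d j)), l j = n := by
    rw [qval, ← hsum]
    exact Finset.sum_filter_add_sum_filter_not _ _ _
  -- k is in the complement, as are coverers of points above t1
  set G := (Finset.univ.filter (fun j => ¬(m j + (l j:ℤ) < w * d j))).erase k with hG
  have hkG : ¬ (m k + (l k:ℤ) < w * d k) := by
    have : w * d k ≤ m k := by
      calc w * (d k:ℤ) ≤ Bv s (n-L+2) * d k := zdm _ (Bv_mono s hs ht1b (by omega))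
        _ ≤ m k := hcon
    omega
  have hsplitG : ∑ j ∈ Finset.univ.filter (fun j => ¬(m j + (l j:ℤ) < w * d j)), l j
      = l k + ∑ j ∈ G, l j := by
    rw [hG, ← Finset.add_sum_erase _ _ (Finset.mem_filter.mpr ⟨Finset.mem_univ k, hkG⟩)]
  set P' := (Finset.Ioc t1 (n-L+2)).image (fun t => Bv s t) with hP'
  have hcard' : P'.card = n - L + 2 - t1 := by
    rw [hP', Finset.card_image_of_injOn, Nat.card_Ioc]
    intro t ht t' ht' he
    simp only [Finset.coe_Ioc, Set.mem_Ioc] at ht ht'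
    by_contra hne
    rcases Nat.lt_or_ge t t' with h | h
    · exact absurd he (ne_of_lt (Bv_strictMonoOn s hs h (by omega)))
    · have : t' < t := by omega
      exact absurd he.symm (ne_of_lt (Bv_strictMonoOn s hs this (by omega)))
  have hcov' : ∀ z ∈ P', ∃ j ∈ G, m j < z * d j ∧ z * d j ≤ m j + l j := by
    intro z hz
    rw [hP', Finset.mem_image] at hz
    obtain ⟨t, ht, rfl⟩ := hz
    simp only [Finset.mem_Ioc] at ht
    have htnU : t ∉ U := by
      intro hmem
      have := U.le_max' t hmem
      omega
    rw [hU, Finset.mem_filter] at htnU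
    push_neg at htnU
    obtain ⟨j, hj⟩ := htnU (Finset.mem_Icc.mpr ⟨by omega, ht.2⟩)
    refine ⟨j, ?_, hj⟩
    rw [hG, Finset.mem_erase]
    have hjk : j ≠ k := by
      rintro rfl
      exact hnotk t ht.2 hj
    refine ⟨hjk, ?_⟩
    rw [Finset.mem_filter]
    refine ⟨Finset.mem_univ j, ?_⟩
    -- e_j ≥ w since j covers Bv t > w
    intro hnot
    have hws : w < Bv s t := Bv_strictMonoOn s hs ht.1 (by omega)
    have hdj : (0:ℤ) < (d j : ℤ) := by exact_mod_cast hd j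
    have h1 : w * d j < Bv s t * d j := mul_lt_mul_of_pos_right hws hdj
    have := hj.2
    omega
  have hub := ub l d m hr hd G P' hcov'
  rw [hcard'] at hub
  have hLk : 1 ≤ L := hl k
  omega

set_option maxHeartbeats 1600000 in
/-- P3 : the "Bad" configuration is impossible. -/
lemma P3 (hr : 1 ≤ r) (hn : 2 ≤ n) (hl : ∀ j, 1 ≤ l j) (hd : ∀ j, 1 ≤ d j)
    (hsum : ∑ j, l j = n) (hs : ∀ i, 0 < s i) (hmono : Monotone s)
    (key : Key s l d m) (k : Fin r) (c : ℕ)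
    (hL2 : 2 ≤ l k) (hc : c + l k < n)
    (hh2 : m k + (l k:ℤ) < Av s (c + l k) * d k)
    (hh3 : Bv s (c+2) * d k ≤ m k) : False := by
  classical
  set L := l k with hLdef
  have hL1 : 1 ≤ L := hl k
  have hdk : (0:ℤ) < (d k : ℤ) := by exact_mod_cast hd k
  -- the chain
  set y : ℕ → ℤ := fun t => if t ≤ c+2 then Bv s t else Av s t with hy
  have hc3 : c + 3 ≤ n := by omega
  have hymem : ∀ t, t ≤ n+1 → y t ∈ Sset s t := by
    intro t ht
    by_cases h : t ≤ c+2
    · simp only [hy, if_pos h]; exact mem_Sset_B s t ht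
    · simp only [hy, if_neg h]; exact mem_Sset_A s t ht
  have hymono : ∀ {t t' : ℕ}, t < t' → t' ≤ n+1 → y t < y t' := by
    intro t t' h h'
    by_cases h1 : t' ≤ c+2
    · simp only [hy, if_pos h1, if_pos (by omega : t ≤ c+2)]
      exact Bv_strictMonoOn s hs h h'
    · by_cases h2 : t ≤ c+2
      · simp only [hy, if_pos h2, if_neg h1]
        calc Bv s t < Bv s (c+3) := Bv_strictMonoOn s hs (by omega) (by omega)
          _ ≤ Av s (c+3) := Bv_le_Av s hmono (c+3) (by omega)
          _ ≤ Av s t' := Av_mono s hs (by omega) h'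
      · simp only [hy, if_neg h1, if_neg h2]
        exact Av_strictMonoOn s hs h h'
  have hymono' : ∀ {t t' : ℕ}, t ≤ t' → t' ≤ n+1 → y t ≤ y t' := by
    intro t t' h h'
    rcases Nat.lt_or_ge t t' with h1 | h1
    · exact le_of_lt (hymono h1 h')
    · have : t = t' := by omega
      rw [this]
  -- low / high structure
  have hlowB : ∀ t, t ≤ c+2 → y t * d k ≤ m k := by
    intro t ht
    calc y t * (d k:ℤ) ≤ Bv s (c+2) * d k := by
          refine zdm _ ?_
          simp only [hy, if_pos ht]
          exact Bv_mono s hs ht (by omega)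
      _ ≤ m k := hh3
  have hhighA : ∀ t, c+3 ≤ t → c+L ≤ t → t ≤ n+1 → m k + (l k:ℤ) < y t * d k := by
    intro t h1 h2 h3
    calc m k + (l k:ℤ) < Av s (c+L) * d k := hh2
      _ ≤ y t * d k := by
          refine zdm _ ?_
          simp only [hy, if_neg (by omega : ¬ t ≤ c+2)]
          exact Av_mono s hs h2 h3
  have hmidrange : ∀ t, t ≤ n+1 → ¬ (y t * d k ≤ m k) → ¬ (m k + (l k:ℤ) < y t * d k) →
      c+3 ≤ t ∧ t ≤ c+L-1 := by
    intro t ht hnl hnh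
    have h1 : c+3 ≤ t := by
      by_contra h
      exact hnl (hlowB t (by omega))
    refine ⟨h1, ?_⟩
    by_contra h
    exact hnh (hhighA t h1 (by omega) ht)
  -- image cardinality helper
  have himg : ∀ (T : Finset ℕ), (∀ t ∈ T, t ≤ n+1) → (T.image y).card = T.card := by
    intro T hT
    rw [Finset.card_image_of_injOn]
    intro t ht t' ht' he
    by_contra hne
    rcases Nat.lt_or_ge t t' with h1 | h1
    · exact absurd he (ne_of_lt (hymono h1 (hT t' ht')))
    · have : t' < t := by omega
      exact absurd he.symm (ne_of_lt (hymono this (hT t ht)))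
  -- some uncovered point exists
  have huncex : ∃ t, t ≤ n+1 ∧ (∀ j, ¬(m j < y t * d j ∧ y t * d j ≤ m j + l j)) := by
    by_contra hno
    push_neg at hno
    have hcov : ∀ z ∈ (Finset.Icc 0 (n+1)).image y, ∃ j ∈ (Finset.univ : Finset (Fin r)),
        m j < z * d j ∧ z * d j ≤ m j + l j := by
      intro z hz
      rw [Finset.mem_image] at hz
      obtain ⟨t, ht, rfl⟩ := hz
      simp only [Finset.mem_Icc] at ht
      obtain ⟨j, hj1, hj2⟩ := hno t ht.2
      exact ⟨j, Finset.mem_univ j, hj1, hj2⟩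
    have hcard : ((Finset.Icc 0 (n+1)).image y).card = n+2 := by
      rw [himg _ (by intro t ht; simp only [Finset.mem_Icc] at ht; omega), Nat.card_Icc]
      omega
    have := ub l d m hr hd Finset.univ _ hcov
    rw [hcard, hsum] at this
    omega
  -- Mid indices bound helper (points covered by k lie in Icc (c+3) (c+L-1))
  have hmidsub : ∀ (T : Finset ℕ), (∀ t ∈ T, t ≤ n+1) →
      ((T.filter (fun t => m k < y t * d k ∧ y t * d k ≤ m k + l k)).card ≤ L - 3) := by
    intro T hT
    have hsub : T.filter (fun t => m k < y t * d k ∧ y t * d k ≤ m k + l k)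
        ⊆ Finset.Icc (c+3) (c+L-1) := by
      intro t ht
      rw [Finset.mem_filter] at ht
      obtain ⟨htT, hcov⟩ := ht
      have := hmidrange t (hT t htT) (by omega) (by omega)
      rw [Finset.mem_Icc]
      exact this
    calc _ ≤ (Finset.Icc (c+3) (c+L-1)).card := Finset.card_le_card hsub
      _ ≤ L - 3 := by rw [Nat.card_Icc]; omega
  -- the uncovered set
  set U := (Finset.Icc 0 (n+1)).filter (fun t => ∀ j, ¬(m j < y t * d j ∧ y t * d j ≤ m j + l j)) with hUdef
  have hUne : U.Nonempty := by
    obtain ⟨t, ht, hunc⟩ := huncex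
    exact ⟨t, Finset.mem_filter.mpr ⟨Finset.mem_Icc.mpr ⟨by omega, ht⟩, hunc⟩⟩
  have hUicc : ∀ t ∈ U, t ≤ n+1 := by
    intro t ht
    have := (Finset.mem_filter.mp ht).1
    rw [Finset.mem_Icc] at this
    omega
  have hUunc : ∀ t ∈ U, ∀ j, ¬(m j < y t * d j ∧ y t * d j ≤ m j + l j) :=
    fun t ht => (Finset.mem_filter.mp ht).2
  have hLowHigh : ∀ t ∈ U, (y t * d k ≤ m k) ∨ (m k + (l k:ℤ) < y t * d k) := by
    intro t htU
    by_cases h : y t * (d k:ℤ) ≤ m k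
    · exact Or.inl h
    · refine Or.inr ?_
      by_contra h2
      exact hUunc t htU k ⟨by omega, by omega⟩
  -- q-filter membership helpers
  have hqsplit : ∀ w : ℤ, m k + (l k:ℤ) < w * d k →
      qval l d m w = l k + ∑ j ∈ (Finset.univ.filter (fun j => m j + (l j:ℤ) < w * d j)).erase k, l j := by
    intro w hw
    rw [qval, ← Finset.add_sum_erase _ _ (Finset.mem_filter.mpr ⟨Finset.mem_univ k, hw⟩)]
  ----------------------------------------------------------------
  -- (E1) there is an uncovered low point
  have hULne : ∃ t ∈ U, y t * (d k:ℤ) ≤ m k := by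
    by_contra hemp
    push_neg at hemp
    set t0 := U.min' hUne with ht0def
    have ht0U := U.min'_mem hUne
    have ht0n : t0 ≤ n+1 := hUicc t0 ht0U
    have ht0High : m k + (l k:ℤ) < y t0 * d k := by
      rcases hLowHigh t0 ht0U with h | h
      · exact absurd h (by exact_mod_cast (by simpa using hemp t0 ht0U))
      · exact h
    have hq := key t0 (y t0) ht0n (hymem t0 ht0n) (hUunc t0 ht0U)
    set w := y t0 with hwdef
    set T := (Finset.Ico 0 t0).filter (fun t => ¬(m k < y t * d k ∧ y t * d k ≤ m k + l k)) with hT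
    have hTsub : ∀ t ∈ T, t ≤ n+1 := by
      intro t ht
      have := (Finset.mem_filter.mp ht).1
      rw [Finset.mem_Ico] at this
      omega
    have hcovP : ∀ z ∈ T.image y, ∃ j ∈ (Finset.univ.filter (fun j => m j + (l j:ℤ) < w * d j)).erase k,
        m j < z * d j ∧ z * d j ≤ m j + l j := by
      intro z hz
      rw [Finset.mem_image] at hz
      obtain ⟨t, htT, rfl⟩ := hz
      obtain ⟨htIco, htnk⟩ := Finset.mem_filter.mp htT
      rw [Finset.mem_Ico] at htIco
      have htcov : ¬ (∀ j, ¬(m j < y t * d j ∧ y t * d j ≤ m j + l j)) := by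
        intro hu
        have hmem : t ∈ U := Finset.mem_filter.mpr ⟨Finset.mem_Icc.mpr ⟨by omega, by omega⟩, hu⟩
        have := U.min'_le t hmem
        omega
      push_neg at htcov
      obtain ⟨j, hj1, hj2⟩ := htcov
      have hjk : j ≠ k := by rintro rfl; exact htnk ⟨hj1, hj2⟩
      have hyt : y t < w := hymono (show t < t0 by omega) ht0n
      have hejw : m j + (l j:ℤ) < w * d j := by
        by_contra hnot
        push_neg at hnot
        refine hUunc t0 ht0U j ⟨?_, hnot⟩
        calc m j < y t * d j := hj1
          _ ≤ w * d j := zdm _ (le_of_lt hyt)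
      exact ⟨j, Finset.mem_erase.mpr ⟨hjk, Finset.mem_filter.mpr ⟨Finset.mem_univ j, hejw⟩⟩, hj1, hj2⟩
    have hubP := ub l d m hr hd _ _ hcovP
    rw [himg T hTsub] at hubP
    have hsplitT : ((Finset.Ico 0 t0).filter (fun t => (m k < y t * d k ∧ y t * d k ≤ m k + l k))).card + T.card = t0 := by
      rw [hT]
      have h9 := Finset.card_filter_add_card_filter_not
        (s := Finset.Ico 0 t0) (p := fun t => (m k < y t * d k ∧ y t * d k ≤ m k + l k))
      rw [Nat.card_Ico] at h9
      omega
    have hmidT := hmidsub (Finset.Ico 0 t0) (by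
      intro t ht
      rw [Finset.mem_Ico] at ht
      omega)
    have e1 : qval l d m w ≤ t0 := hq.1
    rw [hqsplit w ht0High] at e1
    omega
  ----------------------------------------------------------------
  -- (E2) there is an uncovered high point
  have hUHne : ∃ t ∈ U, m k + (l k:ℤ) < y t * (d k:ℤ) := by
    by_contra hemp
    push_neg at hemp
    set t1 := U.max' hUne with ht1def
    have ht1U := U.max'_mem hUne
    have ht1n : t1 ≤ n+1 := hUicc t1 ht1U
    have ht1Low : y t1 * (d k:ℤ) ≤ m k := by
      rcases hLowHigh t1 ht1U with h | h
      · exact h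
      · have := hemp t1 ht1U
        omega
    have hq := key t1 (y t1) ht1n (hymem t1 ht1n) (hUunc t1 ht1U)
    set w := y t1 with hwdef
    have hcompl : qval l d m w
        + ∑ j ∈ Finset.univ.filter (fun j => ¬(m j + (l j:ℤ) < w * d j)), l j = n := by
      rw [qval, ← hsum]
      exact Finset.sum_filter_add_sum_filter_not _ _ _
    have hkFc : ¬ (m k + (l k:ℤ) < w * d k) := by
      have h0 : (0:ℤ) ≤ (l k:ℤ) := by positivity
      omega
    have hsplitFc : ∑ j ∈ Finset.univ.filter (fun j => ¬(m j + (l j:ℤ) < w * d j)), l j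
        = l k + ∑ j ∈ (Finset.univ.filter (fun j => ¬(m j + (l j:ℤ) < w * d j))).erase k, l j := by
      rw [← Finset.add_sum_erase _ _ (Finset.mem_filter.mpr ⟨Finset.mem_univ k, hkFc⟩)]
    set T := (Finset.Icc (t1+1) (n+1)).filter (fun t => ¬(m k < y t * d k ∧ y t * d k ≤ m k + l k)) with hT
    have hTsub : ∀ t ∈ T, t ≤ n+1 := by
      intro t ht
      have := (Finset.mem_filter.mp ht).1
      rw [Finset.mem_Icc] at this
      omega
    have hcovP : ∀ z ∈ T.image y, ∃ j ∈ (Finset.univ.filter (fun j => ¬(m j + (l j:ℤ) < w * d j))).erase k,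
        m j < z * d j ∧ z * d j ≤ m j + l j := by
      intro z hz
      rw [Finset.mem_image] at hz
      obtain ⟨t, htT, rfl⟩ := hz
      obtain ⟨htIcc, htnk⟩ := Finset.mem_filter.mp htT
      rw [Finset.mem_Icc] at htIcc
      have htcov : ¬ (∀ j, ¬(m j < y t * d j ∧ y t * d j ≤ m j + l j)) := by
        intro hu
        have hmem : t ∈ U := Finset.mem_filter.mpr ⟨Finset.mem_Icc.mpr ⟨by omega, htIcc.2⟩, hu⟩
        have := U.le_max' t hmem
        omega
      push_neg at htcov
      obtain ⟨j, hj1, hj2⟩ := htcov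
      have hjk : j ≠ k := by rintro rfl; exact htnk ⟨hj1, hj2⟩
      have hyt : w < y t := hymono (show t1 < t by omega) htIcc.2
      have hejw : ¬ (m j + (l j:ℤ) < w * d j) := by
        push_neg
        calc w * (d j:ℤ) ≤ y t * d j := zdm _ (le_of_lt hyt)
          _ ≤ m j + l j := hj2
      exact ⟨j, Finset.mem_erase.mpr ⟨hjk, Finset.mem_filter.mpr ⟨Finset.mem_univ j, hejw⟩⟩, hj1, hj2⟩
    have hubP := ub l d m hr hd _ _ hcovP
    rw [himg T hTsub] at hubP
    have hsplitT : ((Finset.Icc (t1+1) (n+1)).filter (fun t => (m k < y t * d k ∧ y t * d k ≤ m k + l k))).card + T.card = n+1-t1 := by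
      rw [hT]
      have h9 := Finset.card_filter_add_card_filter_not
        (s := Finset.Icc (t1+1) (n+1)) (p := fun t => (m k < y t * d k ∧ y t * d k ≤ m k + l k))
      rw [Nat.card_Icc] at h9
      omega
    have hmidT := hmidsub (Finset.Icc (t1+1) (n+1)) (by
      intro t ht
      rw [Finset.mem_Icc] at ht
      omega)
    have e1 : t1 ≤ qval l d m w + 1 := hq.2
    rw [hsplitFc] at hcompl
    omega
  ----------------------------------------------------------------
  -- main argument
  set UL := U.filter (fun t => y t * (d k:ℤ) ≤ m k) with hULdef
  set UH := U.filter (fun t => m k + (l k:ℤ) < y t * (d k:ℤ)) with hUHdef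
  have hULne' : UL.Nonempty := by
    obtain ⟨t, h1, h2⟩ := hULne
    exact ⟨t, Finset.mem_filter.mpr ⟨h1, h2⟩⟩
  have hUHne' : UH.Nonempty := by
    obtain ⟨t, h1, h2⟩ := hUHne
    exact ⟨t, Finset.mem_filter.mpr ⟨h1, h2⟩⟩
  set ta := UL.max' hULne' with htadef
  set tb := UH.min' hUHne' with htbdef
  obtain ⟨htaU, htaLow⟩ := Finset.mem_filter.mp (UL.max'_mem hULne')
  obtain ⟨htbU, htbHigh⟩ := Finset.mem_filter.mp (UH.min'_mem hUHne')
  rw [← htadef] at htaU htaLow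
  rw [← htbdef] at htbU htbHigh
  have han : ta ≤ n+1 := hUicc ta htaU
  have hbn : tb ≤ n+1 := hUicc tb htbU
  have hyab : y ta * (d k:ℤ) < y tb * (d k:ℤ) := by
    have h0 : (0:ℤ) ≤ (l k:ℤ) := by positivity
    omega
  have hab : ta < tb := by
    by_contra hcon
    push_neg at hcon
    have := zdm (z := y tb) (z' := y ta) (d k) (hymono' hcon han)
    omega
  have hyablt : y ta < y tb := lt_of_mul_lt_mul_right hyab (le_of_lt hdk)
  have hqa := key ta (y ta) han (hymem ta han) (hUunc ta htaU)
  have hqb := key tb (y tb) hbn (hymem tb hbn) (hUunc tb htbU)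
  set Fta := Finset.univ.filter (fun j => m j + (l j:ℤ) < y ta * d j) with hFta
  set Ftb := Finset.univ.filter (fun j => m j + (l j:ℤ) < y tb * d j) with hFtb
  have hqaval : qval l d m (y ta) = ∑ j ∈ Fta, l j := by rw [hFta]; rfl
  have hqbval : qval l d m (y tb) = ∑ j ∈ Ftb, l j := by rw [hFtb]; rfl
  have hsubF : Fta ⊆ Ftb := by
    intro j hj
    rw [hFta, Finset.mem_filter] at hj
    rw [hFtb, Finset.mem_filter]
    refine ⟨Finset.mem_univ j, ?_⟩
    calc m j + (l j:ℤ) < y ta * d j := hj.2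
      _ ≤ y tb * d j := zdm _ (le_of_lt hyablt)
  set E := Ftb \ Fta with hE
  have hsumsplit : ∑ j ∈ E, l j + ∑ j ∈ Fta, l j = ∑ j ∈ Ftb, l j :=
    Finset.sum_sdiff hsubF
  have hkE : k ∈ E := by
    rw [hE, Finset.mem_sdiff, hFtb, hFta, Finset.mem_filter, Finset.mem_filter]
    refine ⟨⟨Finset.mem_univ k, htbHigh⟩, ?_⟩
    intro hcon
    have := hcon.2
    omega
  have hEsplit : ∑ j ∈ E, l j = l k + ∑ j ∈ E.erase k, l j := by
    rw [← Finset.add_sum_erase _ _ hkE]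
  -- middle points, not covered by k
  set T3 := (Finset.Ioo ta tb).filter (fun t => ¬(m k < y t * d k ∧ y t * d k ≤ m k + l k)) with hT3
  have hT3sub : ∀ t ∈ T3, t ≤ n+1 := by
    intro t ht
    have := (Finset.mem_filter.mp ht).1
    rw [Finset.mem_Ioo] at this
    omega
  have hmidcov : ∀ t, ta < t → t < tb → t ≤ n+1 →
      ∃ j, m j < y t * d j ∧ y t * d j ≤ m j + l j := by
    intro t h1 h2 h3
    by_contra hu
    push_neg at hu
    have hmem : t ∈ U := Finset.mem_filter.mpr ⟨Finset.mem_Icc.mpr ⟨by omega, h3⟩, by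
      intro j hcontra
      have := hu j hcontra.1
      omega⟩
    rcases hLowHigh t hmem with h | h
    · have : t ∈ UL := Finset.mem_filter.mpr ⟨hmem, h⟩
      have := UL.le_max' t this
      omega
    · have : t ∈ UH := Finset.mem_filter.mpr ⟨hmem, h⟩
      have := UH.min'_le t this
      omega
  have hcovmid : ∀ t, ta < t → t < tb → t ≤ n+1 →
      ∀ j, (m j < y t * d j ∧ y t * d j ≤ m j + l j) → j ≠ k → j ∈ E.erase k := by
    intro t h1 h2 h3 j hj hjk
    rw [Finset.mem_erase]
    refine ⟨hjk, ?_⟩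
    rw [hE, Finset.mem_sdiff, hFtb, hFta, Finset.mem_filter, Finset.mem_filter]
    constructor
    · refine ⟨Finset.mem_univ j, ?_⟩
      by_contra hnot
      push_neg at hnot
      refine hUunc tb htbU j ⟨?_, hnot⟩
      calc m j < y t * d j := hj.1
        _ ≤ y tb * d j := zdm _ (le_of_lt (hymono h2 hbn))
    · intro hcon
      have h5 : y ta * (d j:ℤ) ≤ y t * d j := zdm _ (le_of_lt (hymono h1 h3))
      have := hj.2
      have := hcon.2
      omega
  have hcovP3 : ∀ z ∈ T3.image y, ∃ j ∈ E.erase k, m j < z * d j ∧ z * d j ≤ m j + l j := by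
    intro z hz
    rw [Finset.mem_image] at hz
    obtain ⟨t, htT, rfl⟩ := hz
    obtain ⟨htIoo, htnk⟩ := Finset.mem_filter.mp htT
    rw [Finset.mem_Ioo] at htIoo
    obtain ⟨j, hj⟩ := hmidcov t htIoo.1 htIoo.2 (by omega)
    have hjk : j ≠ k := by rintro rfl; exact htnk hj
    exact ⟨j, hcovmid t htIoo.1 htIoo.2 (by omega) j hj hjk, hj⟩
  have hubP3 := ub l d m hr hd _ _ hcovP3
  rw [himg T3 hT3sub] at hubP3
  have hsplitT3 : ((Finset.Ioo ta tb).filter (fun t => (m k < y t * d k ∧ y t * d k ≤ m k + l k))).card + T3.card = tb - ta - 1 := by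
    rw [hT3]
    have h9 := Finset.card_filter_add_card_filter_not
      (s := Finset.Ioo ta tb) (p := fun t => (m k < y t * d k ∧ y t * d k ≤ m k + l k))
    rw [Nat.card_Ioo] at h9
    omega
  have hmidT3 := hmidsub (Finset.Ioo ta tb) (by
    intro t ht
    rw [Finset.mem_Ioo] at ht
    omega)
  have ea : ta ≤ ∑ j ∈ Fta, l j + 1 := by
    have := hqa.2
    rw [hqaval] at this
    exact this
  have eb : ∑ j ∈ Ftb, l j ≤ tb := by
    have := hqb.1
    rw [hqbval] at this
    exact this
  by_cases hL3 : 3 ≤ L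
  · -- L ≥ 3 : direct counting contradiction
    omega
  · -- L = 2 : extra point x = Av (c+2)
    have hLeq : L = 2 := by omega
    set x := Av s (c+2) with hxdef
    have hxHigh : m k + (l k:ℤ) < x * d k := by
      have hcL : c + L = c + 2 := by omega
      rw [hcL] at hh2
      exact hh2
    have hyax : y ta < x := by
      have h5 : y ta * (d k:ℤ) < x * (d k:ℤ) := by
        have h0 : (0:ℤ) ≤ (l k:ℤ) := by positivity
        omega
      exact lt_of_mul_lt_mul_right h5 (le_of_lt hdk)
    have htb3 : c + 3 ≤ tb := by
      by_contra hcon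
      push_neg at hcon
      have := hlowB tb (by omega)
      omega
    have hxtb : x < y tb := by
      have : y tb = Av s tb := by
        simp only [hy, if_neg (by omega : ¬ tb ≤ c+2)]
      rw [this]
      exact Av_strictMonoOn s hs (by omega) hbn
    by_cases hxcov : ∃ g, m g < x * d g ∧ x * d g ≤ m g + l g
    · -- x covered : one extra point for the union bound
      obtain ⟨g, hg⟩ := hxcov
      have hgk : g ≠ k := by
        rintro rfl
        have := hg.2
        omega
      have hgE : g ∈ E.erase k := by
        rw [Finset.mem_erase]
        refine ⟨hgk, ?_⟩
        rw [hE, Finset.mem_sdiff, hFtb, hFta, Finset.mem_filter, Finset.mem_filter]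
        constructor
        · refine ⟨Finset.mem_univ g, ?_⟩
          by_contra hnot
          push_neg at hnot
          refine hUunc tb htbU g ⟨?_, hnot⟩
          calc m g < x * d g := hg.1
            _ ≤ y tb * d g := zdm _ (le_of_lt hxtb)
        · intro hcon
          have h5 : y ta * (d g:ℤ) ≤ x * d g := zdm _ (le_of_lt hyax)
          have := hg.2
          have := hcon.2
          omega
      have hxnotin : x ∉ T3.image y := by
        rw [Finset.mem_image]
        rintro ⟨t, htT, hteq⟩
        obtain ⟨htIoo, _⟩ := Finset.mem_filter.mp htT
        rw [Finset.mem_Ioo] at htIoo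
        by_cases h6 : t ≤ c+2
        · have h7 := hlowB t h6
          rw [hteq] at h7
          omega
        · have : y t = Av s t := by simp only [hy, if_neg h6]
          have h8 : x < y t := by
            rw [this]
            exact Av_strictMonoOn s hs (by omega) (by omega)
          omega
      have hcovP4 : ∀ z ∈ insert x (T3.image y), ∃ j ∈ E.erase k,
          m j < z * d j ∧ z * d j ≤ m j + l j := by
        intro z hz
        rw [Finset.mem_insert] at hz
        rcases hz with rfl | hz
        · exact ⟨g, hgE, hg⟩
        · exact hcovP3 z hz
      have hubP4 := ub l d m hr hd _ _ hcovP4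
      rw [Finset.card_insert_of_notMem hxnotin, himg T3 hT3sub] at hubP4
      omega
    · -- x uncovered
      push_neg at hxcov
      have hqx := key (c+2) x (by omega) (mem_Sset_A s (c+2) (by omega)) (by
        intro j hcontra
        have := hxcov j hcontra.1
        omega)
      have hta2 : ta ≤ c+2 := by
        by_contra hcon
        push_neg at hcon
        have : y ta = Av s ta := by simp only [hy, if_neg (by omega : ¬ ta ≤ c+2)]
        have h8 : x < y ta := by
          rw [this]
          exact Av_strictMonoOn s hs (by omega) han
        omega
      set Fx := Finset.univ.filter (fun j => m j + (l j:ℤ) < x * d j) with hFx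
      have hqxval : qval l d m x = ∑ j ∈ Fx, l j := by rw [hFx]; rfl
      have hsubFx : Fta ⊆ Fx := by
        intro j hj
        rw [hFta, Finset.mem_filter] at hj
        rw [hFx, Finset.mem_filter]
        refine ⟨Finset.mem_univ j, ?_⟩
        calc m j + (l j:ℤ) < y ta * d j := hj.2
          _ ≤ x * d j := zdm _ (le_of_lt hyax)
      set Ex := Fx \ Fta with hEx
      have hsumsplitx : ∑ j ∈ Ex, l j + ∑ j ∈ Fta, l j = ∑ j ∈ Fx, l j :=
        Finset.sum_sdiff hsubFx
      have hkEx : k ∈ Ex := by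
        rw [hEx, Finset.mem_sdiff, hFx, hFta, Finset.mem_filter, Finset.mem_filter]
        refine ⟨⟨Finset.mem_univ k, hxHigh⟩, ?_⟩
        intro hcon
        have := hcon.2
        omega
      have hExsplit : ∑ j ∈ Ex, l j = l k + ∑ j ∈ Ex.erase k, l j := by
        rw [← Finset.add_sum_erase _ _ hkEx]
      have hylex : ∀ t, t ≤ c+2 → y t < x := by
        intro t ht
        have h7 := hlowB t ht
        have h5 : y t * (d k:ℤ) < x * (d k:ℤ) := by
          have h0 : (0:ℤ) ≤ (l k:ℤ) := by positivity
          omega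
        exact lt_of_mul_lt_mul_right h5 (le_of_lt hdk)
      have hcov5 : ∀ z ∈ (Finset.Icc (ta+1) (c+2)).image y, ∃ j ∈ Ex.erase k,
          m j < z * d j ∧ z * d j ≤ m j + l j := by
        intro z hz
        rw [Finset.mem_image] at hz
        obtain ⟨t, htT, rfl⟩ := hz
        rw [Finset.mem_Icc] at htT
        have hcovt : ∃ j, m j < y t * d j ∧ y t * d j ≤ m j + l j := by
          by_contra hu
          push_neg at hu
          have hmem : t ∈ U := Finset.mem_filter.mpr ⟨Finset.mem_Icc.mpr ⟨by omega, by omega⟩, by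
            intro j hcontra
            have := hu j hcontra.1
            omega⟩
          have : t ∈ UL := Finset.mem_filter.mpr ⟨hmem, hlowB t htT.2⟩
          have := UL.le_max' t this
          omega
        obtain ⟨j, hj⟩ := hcovt
        have hjk : j ≠ k := by
          rintro rfl
          have := hlowB t htT.2
          have := hj.1
          omega
        refine ⟨j, ?_, hj⟩
        rw [Finset.mem_erase]
        refine ⟨hjk, ?_⟩
        rw [hEx, Finset.mem_sdiff, hFx, hFta, Finset.mem_filter, Finset.mem_filter]
        constructor
        · refine ⟨Finset.mem_univ j, ?_⟩
          by_contra hnot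
          push_neg at hnot
          have h6 : m j < x * d j := by
            calc m j < y t * d j := hj.1
              _ ≤ x * d j := zdm _ (le_of_lt (hylex t htT.2))
          have := hxcov j h6
          omega
        · intro hcon
          have h5 : y ta * (d j:ℤ) ≤ y t * d j := zdm _ (le_of_lt (hymono (show ta < t by omega) (by omega)))
          have := hj.2
          have := hcon.2
          omega
      have hub5 := ub l d m hr hd _ _ hcov5
      rw [himg _ (by
        intro t ht
        rw [Finset.mem_Icc] at ht
        omega)] at hub5
      rw [Nat.card_Icc] at hub5
      have hqxle : qval l d m x ≤ c+2 := hqx.1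
      rw [hqxval] at hqxle
      omega


end Main
end Stmt18

open Stmt18 in
theorem stmt18 (r n : ℕ) (hr : 1 ≤ r) (hn : 2 ≤ n) (l d : Fin r → ℕ)
    (hl : ∀ k, 1 ≤ l k) (hd : ∀ k, 1 ≤ d k) (hsum : ∑ k, l k = n)
    (s : Fin (n + 1) → ℕ) (hs : ∀ i, 0 < s i) (hmono : Monotone s)
    (hex : ∃ m : Fin r → ℤ, Nset l d s m = {0, 1}) (k : Fin r) :
    (d k : ℤ) *
        (∑ j ∈ Finset.univ.filter (fun j : Fin (n + 1) => n + 2 ≤ (j : ℕ) + l k), (s j : ℤ))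
        - (l k : ℤ)
      < (d k : ℤ) * ((s ⟨0, by omega⟩ : ℤ) + (s ⟨1, by omega⟩ : ℤ)) := by
  classical
  obtain ⟨m, hex⟩ := hex
  -- identify the goal sum with Av (l k - 1)
  have hgoalsum : ∑ j ∈ Finset.univ.filter (fun j : Fin (n + 1) => n + 2 ≤ (j : ℕ) + l k), (s j : ℤ)
      = Stmt18.Av s (l k - 1) := by
    unfold Stmt18.Av Stmt18.Af
    apply Finset.sum_congr _ (fun _ _ => rfl)
    apply Finset.filter_congr
    intro i _
    have := hl k
    constructor
    · intro h; omega
    · intro h; omega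
  -- identify Bv 2 with s 0 + s 1
  have hB2 : Stmt18.Bv s 2 = (s ⟨0, by omega⟩ : ℤ) + (s ⟨1, by omega⟩ : ℤ) := by
    unfold Stmt18.Bv Stmt18.Bf
    rw [show Finset.univ.filter (fun i : Fin (n+1) => (i:ℕ) < 2)
        = {(⟨0, by omega⟩ : Fin (n+1)), ⟨1, by omega⟩} by
      ext i
      simp only [Finset.mem_filter, Finset.mem_univ, true_and, Finset.mem_insert,
        Finset.mem_singleton]
      constructor
      · intro h
        rcases Nat.lt_or_ge (i:ℕ) 1 with h1 | h1
        · left; apply Fin.ext; show (i:ℕ) = 0; omega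
        · right; apply Fin.ext; simpa using by omega
      · rintro (rfl | rfl) <;> simp]
    rw [Finset.sum_pair (by intro h; have := congrArg Fin.val h; simp at this)]
  rw [hgoalsum, ← hB2]
  -- the key property
  have key : Stmt18.Key s l d m := by
    intro p z hp hz hunc
    have hmem : ((p:ℤ) - qval l d m z) ∈ Nset l d s m := ⟨p, hp, z, ⟨hz, fun j => hunc j⟩, rfl⟩
    rw [hex] at hmem
    simp only [Set.mem_insert_iff, Set.mem_singleton_iff] at hmem
    omega
  set L := l k with hLdef
  have hL1 : 1 ≤ L := hl k
  have hLn : L ≤ n := by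
    rw [← hsum]
    exact Finset.single_le_sum (fun j _ => Nat.zero_le (l j)) (Finset.mem_univ k)
  have hdk : (0:ℤ) < (d k:ℤ) := by exact_mod_cast hd k
  by_cases hL2 : 2 ≤ L
  · -- main case
    set cset := (Finset.Icc 0 (n-L)).filter
      (fun c => ¬(m k + (l k:ℤ) < Av s (c + L - 1) * d k)) with hcset
    have h0cset : 0 ∈ cset := by
      rw [hcset, Finset.mem_filter]
      refine ⟨Finset.mem_Icc.mpr ⟨le_refl 0, by omega⟩, ?_⟩
      have := Stmt18.P1 s l d m hr hn hl hd hsum hs key k hLn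
      simpa using this
    have hcne : cset.Nonempty := ⟨0, h0cset⟩
    set c := cset.max' hcne with hcdef
    obtain ⟨hcIcc, hcprop⟩ := Finset.mem_filter.mp (cset.max'_mem hcne)
    rw [Finset.mem_Icc] at hcIcc
    -- i_k < Bv (c+2)
    have hBc : ¬ (Bv s (c+2) * (d k:ℤ) ≤ m k) := by
      rcases Nat.lt_or_ge c (n-L) with hlt | hge
      · -- c < n-L : use maximality and P3
        have hnotin : c+1 ∉ cset := by
          intro hmem
          have := cset.le_max' (c+1) hmem
          omega
        rw [hcset, Finset.mem_filter] at hnotin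
        push_neg at hnotin
        have hh2 := hnotin (Finset.mem_Icc.mpr ⟨by omega, by omega⟩)
        have hcl : c + 1 + L - 1 = c + L := by omega
        rw [hcl] at hh2
        intro hh3
        exact Stmt18.P3 s l d m hr hn hl hd hsum hs hmono key k c hL2 (by omega) hh2 hh3
      · -- c = n-L : use P2
        have hceq : c = n - L := by omega
        have := Stmt18.P2 s l d m hr hn hl hd hsum hs key k hLn
        rw [hceq]
        have hnl : n - L + 2 = n - l k + 2 := by rw [← hLdef]
        rw [hnl]
        exact this
    push_neg at hBc
    have hAc : Av s (c + L - 1) * (d k:ℤ) ≤ m k + l k := by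
      push_neg at hcprop
      exact hcprop
    -- combine with the shift inequality
    have hshift := Stmt18.shift s hmono c L (by omega) (by omega)
    have hmul : (Av s (L-1) + Bv s (c+2)) * (d k:ℤ) ≤ (Av s (c+L-1) + Bv s 2) * (d k:ℤ) :=
      mul_le_mul_of_nonneg_right hshift (le_of_lt hdk)
    have hexp : Av s (L-1) * (d k:ℤ) + Bv s (c+2) * d k ≤ Av s (c+L-1) * d k + Bv s 2 * d k := by
      nlinarith [hmul]
    have hfin : Av s (L-1) * (d k:ℤ) - l k < Bv s 2 * d k := by omega
    calc (d k:ℤ) * Av s (L - 1) - l k = Av s (L-1) * d k - l k := by ring_nf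
      _ < Bv s 2 * d k := hfin
      _ = (d k:ℤ) * Bv s 2 := by ring
  · -- L = 1 : trivial
    have hLeq : L = 1 := by omega
    have hA0 : Av s (L - 1) = 0 := by
      have : L - 1 = 0 := by omega
      rw [this]
      unfold Stmt18.Av Stmt18.Af
      rw [show (Finset.univ.filter (fun i : Fin (n+1) => n + 1 ≤ (i:ℕ) + 0)) = ∅ by
        ext i
        simp only [Finset.mem_filter, Finset.mem_univ, true_and, Finset.notMem_empty,
          iff_false, add_zero, not_le]
        exact i.isLt]
      simp
    rw [hA0]
    have h1 : (0:ℤ) < (s ⟨0, by omega⟩ : ℤ) := by exact_mod_cast hs _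
    have h2 : (0:ℤ) < (s ⟨1, by omega⟩ : ℤ) := by exact_mod_cast hs _
    have hB2pos : 0 < Stmt18.Bv s 2 := by omega
    nlinarith
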